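/- If σ is a full-rank density operator, Ψ a unit vector with ‖ |Ψ⟩⟨Ψ| − σ ‖₁ ≤ ε and 0 < ε < 2/3, and Φ is a unit eigenvector of σ with largest eigenvalue, then P_H(σ) ≥ V_H(Φ) · (2/ε − 3). -/

import Mathlib

open Matrix BigOperators

/-- Matrix element ⟨v|A|w⟩. -/
noncomputable def matElem {n : Type*} [Fintype n] (v : n → ℂ)
    (A : Matrix n n ℂ) (w : n → ℂ) : ℂ :=
  star v ⬝ᵥ A.mulVec w

/-- Energy variance ⟨ψ|H²|ψ⟩ − ⟨ψ|H|ψ⟩² of a (unit) vector ψ. -/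
noncomputable def variance {n : Type*} [Fintype n] (H : Matrix n n ℂ) (v : n → ℂ) : ℝ :=
  (matElem v (H * H) v).re - ((matElem v H v).re) ^ 2

/-- Quantum Fisher information computed from a spectral decomposition
`ρ = ∑ j, p j • |ψ j⟩⟨ψ j|`; terms with `p j + p k = 0` are omitted. -/
noncomputable def QFI {ι : Type*} [Fintype ι] {n : Type*} [Fintype n]
    (p : ι → ℝ) (ψ : ι → n → ℂ) (H : Matrix n n ℂ) : ℝ :=
  2 * ∑ j, ∑ k, if p j + p k = 0 then 0 else
    (p j - p k) ^ 2 / (p j + p k) * Complex.normSq (matElem (ψ j) H (ψ k))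

/-- Outer product |v⟩⟨v| as a matrix. -/
noncomputable def outer {n : Type*} (v : n → ℂ) : Matrix n n ℂ :=
  fun i j => v i * star (v j)

/-- Trace norm of a Hermitian matrix: the sum of the absolute values of its
eigenvalues. -/
noncomputable def traceNormH {n : Type*} [Fintype n] [DecidableEq n]
    {A : Matrix n n ℂ} (hA : A.IsHermitian) : ℝ :=
  ∑ i, |hA.eigenvalues i|

/-- Purity of coherence P_H(ρ) = Tr(H ρ² H ρ⁻¹) − Tr(ρ H²) (for invertible ρ). -/
noncomputable def PoC {n : Type*} [Fintype n] [DecidableEq n]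
    (H ρ : Matrix n n ℂ) : ℝ :=
  ((H * ρ ^ 2 * H * ρ⁻¹).trace - (ρ * H ^ 2).trace).re

lemma quadform_diag {d : ℕ} (B : Matrix (Fin d) (Fin d) ℂ) (dv : Fin d → ℂ) (x : Fin d → ℂ) :
    star x ⬝ᵥ (B * diagonal dv * Bᴴ) *ᵥ x
      = ∑ j, dv j * (Complex.normSq ((Bᴴ *ᵥ x) j) : ℂ) := by
  set y := Bᴴ *ᵥ x with hy
  have h1 : (B * diagonal dv * Bᴴ) *ᵥ x = B *ᵥ (diagonal dv *ᵥ y) := by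
    simp [← mulVec_mulVec, hy]
  rw [h1, Matrix.dotProduct_mulVec]
  have h2 : star x ᵥ* B = star y := by
    rw [hy, star_mulVec, conjTranspose_conjTranspose]
  rw [h2]
  simp [dotProduct, mulVec_diagonal, Complex.normSq_eq_conj_mul_self]
  exact Finset.sum_congr rfl fun i _ => by ring

lemma trace_diag {d : ℕ} (M : Matrix (Fin d) (Fin d) ℂ) (a b : Fin d → ℂ) :
    (M * diagonal a * M * diagonal b).trace
      = ∑ j, ∑ k, M j k * a k * M k j * b j := by
  simp only [Matrix.trace, Matrix.diag, Matrix.mul_diagonal]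
  simp only [Matrix.mul_apply, Finset.sum_mul]
  refine Finset.sum_congr rfl fun j _ => Finset.sum_congr rfl fun k _ => ?_
  simp [Matrix.diagonal_apply, mul_ite, ite_mul, Finset.sum_ite_eq, Finset.sum_ite_eq']

lemma trace_diag_sq {d : ℕ} (M : Matrix (Fin d) (Fin d) ℂ) (a : Fin d → ℂ) :
    (diagonal a * (M * M)).trace = ∑ j, ∑ k, a j * (M j k * M k j) := by
  simp only [Matrix.trace, Matrix.diag, Matrix.diagonal_mul]
  simp only [Matrix.mul_apply, Finset.mul_sum]

lemma coeff_bound {ε lam q : ℝ} (hε0 : 0 < ε) (hε2 : ε < 2/3)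
    (hq0 : 0 < q) (hlam1 : lam ≤ 1) (hql : q ≤ 1 - lam) (hlow : 1 - ε/2 ≤ lam) :
    2/ε - 3 ≤ (q^2 * lam⁻¹ - lam) + (lam^2 * q⁻¹ - q) := by
  have hlam0 : 0 < lam := by nlinarith
  have hqe : q ≤ ε/2 := by linarith
  have hd : 1 - ε ≤ lam - q := by linarith
  have hdp : 0 < 1 - ε := by linarith
  have key : (q^2 * lam⁻¹ - lam) + (lam^2 * q⁻¹ - q)
      = (lam - q)^2 * (q⁻¹ + lam⁻¹) := by field_simp; ring
  have h1 : (1-ε)^2 ≤ (lam - q)^2 := by nlinarith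
  have h2 : 2/ε + 1 ≤ q⁻¹ + lam⁻¹ := by
    have hq : 2/ε ≤ q⁻¹ := by
      rw [div_le_iff₀ hε0, inv_mul_eq_div, le_div_iff₀ hq0]; linarith
    have hl : 1 ≤ lam⁻¹ := (one_le_inv₀ hlam0).mpr hlam1
    linarith
  have h3 : (1-ε)^2 * (2/ε + 1) ≤ (lam - q)^2 * (q⁻¹ + lam⁻¹) := by
    apply mul_le_mul h1 h2 (by positivity) (by positivity)
  have h4 : (1-ε)^2 * (2/ε + 1) = 2/ε - 3 + ε^2 := by field_simp; ring
  nlinarith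

lemma pair_nonneg {a b : ℝ} (ha : 0 < a) (hb : 0 < b) :
    0 ≤ (b^2 * a⁻¹ - a) + (a^2 * b⁻¹ - b) := by
  have key : (b^2 * a⁻¹ - a) + (a^2 * b⁻¹ - b) = (a - b)^2 * (b⁻¹ + a⁻¹) := by
    field_simp; ring
  rw [key]; positivity

/-- If a full-rank state σ is ε-close (trace norm) to a pure state Ψ with
ε < 2/3, then P_H(σ) ≥ V_H(Φ)·(2/ε − 3) where Φ is a top eigenvector of σ. -/
theorem poc_lower_bound_close_to_pure {d : ℕ}
    (H σ : Matrix (Fin d) (Fin d) ℂ) (hH : H.IsHermitian)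
    (p : Fin d → ℝ) (ψ : Fin d → Fin d → ℂ)
    (horth : ∀ i j, star (ψ i) ⬝ᵥ ψ j = if i = j then (1 : ℂ) else 0)
    (hp : ∀ j, 0 < p j) (hsum : ∑ j, p j = 1)
    (hσ : σ = ∑ j, (p j : ℂ) • outer (ψ j))
    (Ψ : Fin d → ℂ) (hΨ : star Ψ ⬝ᵥ Ψ = 1)
    {ε : ℝ} (hε0 : 0 < ε) (hε2 : ε < 2 / 3)
    (hA : (outer Ψ - σ).IsHermitian)
    (hclose : traceNormH hA ≤ ε)
    (i₀ : Fin d) (hmax : ∀ j, p j ≤ p i₀) :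
    variance H (ψ i₀) * (2 / ε - 3) ≤ PoC H σ := by
  classical
  set U : Matrix (Fin d) (Fin d) ℂ := Matrix.of fun i j => ψ j i with hU
  have hUl : Uᴴ * U = 1 := by
    ext i j
    simpa [Matrix.mul_apply, Matrix.conjTranspose_apply, dotProduct,
      Matrix.one_apply, hU] using horth i j
  have hUr : U * Uᴴ = 1 := mul_eq_one_comm.mp hUl
  have key : ∀ X Y : Matrix (Fin d) (Fin d) ℂ, (U*X*Uᴴ) * (U*Y*Uᴴ) = U*(X*Y)*Uᴴ := by
    intro X Y
    have h : (U*X*Uᴴ)*(U*Y*Uᴴ) = U*(X*(Uᴴ*U)*Y)*Uᴴ := by simp only [Matrix.mul_assoc]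
    rw [h, hUl, Matrix.mul_one]
  set M : Matrix (Fin d) (Fin d) ℂ := Uᴴ * H * U with hM
  have hMherm : Mᴴ = M := by
    rw [hM]
    simp only [Matrix.conjTranspose_mul, Matrix.conjTranspose_conjTranspose, hH.eq]
    rw [Matrix.mul_assoc]
  have hMc : ∀ j k, M k j = star (M j k) := by
    intro j k
    conv_lhs => rw [← hMherm]
    rfl
  have hUAU : ∀ (A : Matrix (Fin d) (Fin d) ℂ) j k, (Uᴴ*A*U) j k = matElem (ψ j) A (ψ k) := by
    intro A j k
    simp [matElem, Matrix.mul_apply, dotProduct, Matrix.mulVec, hU,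
      Finset.mul_sum, Matrix.conjTranspose_apply, Finset.sum_mul]
    rw [Finset.sum_comm]
    exact Finset.sum_congr rfl fun a _ => Finset.sum_congr rfl fun b _ => by ring
  set D : Matrix (Fin d) (Fin d) ℂ := diagonal (fun j => (p j : ℂ)) with hD
  have hσU : σ = U * D * Uᴴ := by
    rw [hσ]
    ext i k
    simp [Matrix.sum_apply, outer, Matrix.mul_apply, hD, hU, Matrix.diagonal_apply,
      Matrix.conjTranspose_apply, Finset.sum_mul, mul_ite, ite_mul]
    exact Finset.sum_congr rfl fun j _ => by ring
  -- inverse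
  set E : Matrix (Fin d) (Fin d) ℂ := diagonal (fun j => (p j : ℂ)⁻¹) with hE
  have hpne : ∀ j, (p j : ℂ) ≠ 0 := fun j => by
    exact_mod_cast Complex.ofReal_ne_zero.mpr (ne_of_gt (hp j))
  have hDE : D * E = 1 := by
    rw [hD, hE, Matrix.diagonal_mul_diagonal]
    have h : (fun i => (p i:ℂ) * (p i:ℂ)⁻¹) = fun _ => (1:ℂ) :=
      funext fun i => mul_inv_cancel₀ (hpne i)
    rw [h, Matrix.diagonal_one]
  have hσinv : σ⁻¹ = U * E * Uᴴ := by
    apply Matrix.inv_eq_right_inv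
    rw [hσU, key, hDE, Matrix.mul_one, hUr]
  -- traces
  have htr1 : (H * σ^2 * H * σ⁻¹).trace = (M * (D*D) * M * E).trace := by
    rw [pow_two, hσinv, hσU, key]
    have h1 : H * (U*(D*D)*Uᴴ) * H * (U*E*Uᴴ) = (H*U*(D*D)*Uᴴ*H*U*E)*Uᴴ := by
      simp only [Matrix.mul_assoc]
    have h2 : Uᴴ*(H*U*(D*D)*Uᴴ*H*U*E) = (Uᴴ*H*U)*(D*D)*(Uᴴ*H*U)*E := by
      simp only [Matrix.mul_assoc]
    rw [h1, Matrix.trace_mul_comm, h2, hM]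
  have htr2 : (σ * H^2).trace = (D * (M*M)).trace := by
    rw [pow_two, hσU]
    have h1 : U*D*Uᴴ*(H*H) = U*(D*(Uᴴ*H*(U*Uᴴ)*H))  := by
      rw [hUr, Matrix.mul_one]
      simp only [Matrix.mul_assoc]
    have h2 : D*(Uᴴ*H*(U*Uᴴ)*H)*U = D*(M*M) := by
      rw [hM]
      simp only [Matrix.mul_assoc]
    rw [h1, Matrix.trace_mul_comm, h2]
  -- real form of PoC
  set s : Fin d → Fin d → ℝ := fun j k => Complex.normSq (M j k) with hs
  have hprod : ∀ j k, M j k * M k j = ((s j k : ℝ) : ℂ) := by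
    intro j k
    rw [hMc j k, hs]
    exact Complex.mul_conj (M j k)
  have hssymm : ∀ j k, s j k = s k j := by
    intro j k
    simp [hs, hMc j k, Complex.normSq_conj]
  have hsnn : ∀ j k, 0 ≤ s j k := fun j k => Complex.normSq_nonneg _
  have hPoC : PoC H σ = ∑ j, ∑ k, s j k * ((p k)^2 * (p j)⁻¹ - p j) := by
    have e1 : ∀ j k : Fin d, M j k * ((p k:ℂ)*(p k)) * M k j * ((p j:ℂ))⁻¹
        - (p j:ℂ) * (M j k * M k j)
        = ((s j k * ((p k)^2 * (p j)⁻¹ - p j) : ℝ) : ℂ) := by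
      intro j k
      rw [show M j k * ((p k:ℂ)*(p k)) * M k j * ((p j:ℂ))⁻¹
          = (M j k * M k j) * (((p k:ℂ)*(p k)) * ((p j:ℂ))⁻¹) from by ring]
      rw [hprod j k]
      push_cast
      ring
    unfold PoC
    rw [htr1, htr2, hD, hE, Matrix.diagonal_mul_diagonal, trace_diag, trace_diag_sq]
    have e2 : (∑ j, ∑ k, M j k * ((p k:ℂ)*(p k)) * M k j * ((p j:ℂ))⁻¹)
        - (∑ j, ∑ k, (p j:ℂ) * (M j k * M k j))
        = ((∑ j, ∑ k, s j k * ((p k)^2 * (p j)⁻¹ - p j) : ℝ) : ℂ) := by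
      rw [← Finset.sum_sub_distrib]
      push_cast
      refine Finset.sum_congr rfl fun j _ => ?_
      rw [← Finset.sum_sub_distrib]
      refine Finset.sum_congr rfl fun k _ => ?_
      rw [e1 j k]
      push_cast
      ring
    rw [e2, Complex.ofReal_re]
  -- variance
  have hH2 : Uᴴ*(H*H)*U = M*M := by
    have h1 : Uᴴ*(H*H)*U = Uᴴ*H*(U*Uᴴ)*H*U := by
      rw [hUr, Matrix.mul_one]
      simp only [Matrix.mul_assoc]
    rw [h1, hM]
    simp only [Matrix.mul_assoc]
  have hVar : variance H (ψ i₀) = ∑ k ∈ Finset.univ.erase i₀, s i₀ k := by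
    have hme1 : matElem (ψ i₀) (H*H) (ψ i₀) = ((∑ k, s i₀ k : ℝ) : ℂ) := by
      rw [← hUAU (H*H) i₀ i₀, hH2]
      rw [Matrix.mul_apply]
      push_cast
      exact Finset.sum_congr rfl fun k _ => hprod i₀ k
    have hme2 : matElem (ψ i₀) H (ψ i₀) = M i₀ i₀ := (hUAU H i₀ i₀).symm
    have him : (M i₀ i₀).im = 0 := by
      have h := hMc i₀ i₀
      have := congrArg Complex.im h
      simp [Complex.conj_im] at this
      linarith
    have hsii : s i₀ i₀ = (M i₀ i₀).re ^ 2 := by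
      rw [hs]
      simp [Complex.normSq_apply, him]
      ring
    unfold variance
    rw [hme1, hme2, Complex.ofReal_re, ← hsii]
    rw [← Finset.add_sum_erase _ _ (Finset.mem_univ i₀)]
    ring
  -- overlap with Ψ and eigenvalue bound
  set v : Fin d → ℂ := Uᴴ *ᵥ Ψ with hv
  have hnorm1 : ∑ j, (Complex.normSq (v j) : ℂ) = 1 := by
    have h := quadform_diag U (fun _ => (1:ℂ)) Ψ
    rw [Matrix.diagonal_one, Matrix.mul_one, hUr] at h
    simp only [one_mul] at h
    rw [← hv] at h
    rw [← h]
    simp [hΨ]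
  have hnorm1' : ∑ j, Complex.normSq (v j) = 1 := by
    have := congrArg Complex.re hnorm1
    push_cast at this
    simpa using this
  have hsig : matElem Ψ σ Ψ = ∑ j, (p j : ℂ) * (Complex.normSq (v j) : ℂ) := by
    rw [matElem, hσU, hD, quadform_diag, ← hv]
  have houter : star Ψ ⬝ᵥ (outer Ψ) *ᵥ Ψ = 1 := by
    have h : (outer Ψ) *ᵥ Ψ = fun i => Ψ i * (star Ψ ⬝ᵥ Ψ) := by
      funext i
      simp [outer, Matrix.mulVec, dotProduct, Finset.mul_sum]
      exact Finset.sum_congr rfl fun j _ => by ring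
    rw [h, hΨ]
    simp only [mul_one]
    exact hΨ
  -- spectral decomposition of A = outer Ψ - σ
  set μ : Fin d → ℝ := hA.eigenvalues with hμ
  set V : Matrix (Fin d) (Fin d) ℂ := (hA.eigenvectorUnitary : Matrix (Fin d) (Fin d) ℂ) with hV
  have hVmem := hA.eigenvectorUnitary.2
  have hVr : V * Vᴴ = 1 := by
    rw [hV, ← Matrix.star_eq_conjTranspose]
    exact (Matrix.mem_unitaryGroup_iff).mp hVmem
  have hspec : outer Ψ - σ = V * diagonal (fun i => (μ i : ℂ)) * Vᴴ := by
    have h := hA.spectral_theorem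
    rw [Unitary.conjStarAlgAut_apply] at h
    rw [← Matrix.star_eq_conjTranspose] at *
    exact h
  set w : Fin d → ℂ := Vᴴ *ᵥ Ψ with hw
  have hwnorm : ∑ i, Complex.normSq (w i) = 1 := by
    have h := quadform_diag V (fun _ => (1:ℂ)) Ψ
    rw [Matrix.diagonal_one, Matrix.mul_one, hVr] at h
    simp only [one_mul] at h
    rw [← hw] at h
    have h2 : ((∑ i, Complex.normSq (w i) : ℝ) : ℂ) = 1 := by
      push_cast
      rw [← h]
      simp [hΨ]
    exact_mod_cast h2
  have hwle : ∀ i, Complex.normSq (w i) ≤ 1 := by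
    intro i
    rw [← hwnorm]
    exact Finset.single_le_sum (fun j _ => Complex.normSq_nonneg _) (Finset.mem_univ i)
  have hquadA : (1 : ℂ) - ∑ j, (p j : ℂ) * (Complex.normSq (v j) : ℂ)
      = ∑ i, (μ i : ℂ) * (Complex.normSq (w i) : ℂ) := by
    have h := quadform_diag V (fun i => (μ i : ℂ)) Ψ
    rw [← hspec, ← hw] at h
    rw [← h, Matrix.sub_mulVec, dotProduct_sub, houter, ← hsig, matElem]
  have hre : 1 - ∑ j, p j * Complex.normSq (v j) = ∑ i, μ i * Complex.normSq (w i) := by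
    have := congrArg Complex.re hquadA
    push_cast at this
    simpa using this
  -- trace of A is zero
  have htrA : ∑ i, μ i = 0 := by
    have h1 : (outer Ψ - σ).trace = 0 := by
      rw [Matrix.trace_sub]
      have ht1 : (outer Ψ).trace = 1 := by
        rw [Matrix.trace]
        simp only [Matrix.diag, outer]
        rw [← hΨ]
        simp [dotProduct]
        exact Finset.sum_congr rfl fun i _ => by ring
      have ht2 : σ.trace = 1 := by
        rw [hσU, Matrix.trace_mul_comm, ← Matrix.mul_assoc, hUl, Matrix.one_mul, hD,
          Matrix.trace_diagonal]
        push_cast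
        exact_mod_cast congrArg (fun x : ℝ => (x : ℂ)) hsum
      rw [ht1, ht2, sub_self]
    have h2 : (outer Ψ - σ).trace = ((∑ i, μ i : ℝ) : ℂ) := by
      rw [hspec, Matrix.trace_mul_comm, ← Matrix.mul_assoc]
      have : Vᴴ * V = 1 := mul_eq_one_comm.mp hVr
      rw [this, Matrix.one_mul, Matrix.trace_diagonal]
      push_cast
      rfl
    rw [h2] at h1
    exact_mod_cast h1
  -- λ lower bound
  have hsum_abs : ∑ i, |μ i| ≤ ε := hclose
  have hposbound : ∑ i, μ i * Complex.normSq (w i) ≤ ε / 2 := by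
    have h1 : ∀ i, μ i * Complex.normSq (w i) ≤ (|μ i| + μ i) / 2 := by
      intro i
      rcases le_or_gt (μ i) 0 with h | h
      · have : μ i * Complex.normSq (w i) ≤ 0 :=
          mul_nonpos_of_nonpos_of_nonneg h (Complex.normSq_nonneg _)
        have habs : (|μ i| + μ i) / 2 = 0 := by rw [abs_of_nonpos h]; ring
        linarith
      · have habs : (|μ i| + μ i) / 2 = μ i := by rw [abs_of_pos h]; ring
        rw [habs]
        calc μ i * Complex.normSq (w i) ≤ μ i * 1 :=
              mul_le_mul_of_nonneg_left (hwle i) (le_of_lt h)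
          _ = μ i := mul_one _
    calc ∑ i, μ i * Complex.normSq (w i) ≤ ∑ i, (|μ i| + μ i) / 2 :=
          Finset.sum_le_sum fun i _ => h1 i
      _ = ((∑ i, |μ i|) + ∑ i, μ i) / 2 := by rw [← Finset.sum_add_distrib, ← Finset.sum_div]
      _ = (∑ i, |μ i|) / 2 := by rw [htrA]; ring_nf
      _ ≤ ε / 2 := by linarith
  have hoverlap : 1 - ε/2 ≤ ∑ j, p j * Complex.normSq (v j) := by
    have := hre
    linarith [hposbound, hre.symm ▸ hposbound]
  have htop : ∑ j, p j * Complex.normSq (v j) ≤ p i₀ := by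
    calc ∑ j, p j * Complex.normSq (v j) ≤ ∑ j, p i₀ * Complex.normSq (v j) :=
          Finset.sum_le_sum fun j _ =>
            mul_le_mul_of_nonneg_right (hmax j) (Complex.normSq_nonneg _)
      _ = p i₀ * ∑ j, Complex.normSq (v j) := by rw [Finset.mul_sum]
      _ = p i₀ := by rw [hnorm1', mul_one]
  have hlam_low : 1 - ε/2 ≤ p i₀ := le_trans hoverlap htop
  have hlam_le1 : p i₀ ≤ 1 := by
    rw [← hsum]
    exact Finset.single_le_sum (fun j _ => le_of_lt (hp j)) (Finset.mem_univ i₀)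
  have hq_le : ∀ k, k ≠ i₀ → p k ≤ 1 - p i₀ := by
    intro k hk
    have h : p k + p i₀ ≤ ∑ j, p j := by
      have : ({k, i₀} : Finset (Fin d)) ⊆ Finset.univ := Finset.subset_univ _
      calc p k + p i₀ = ∑ j ∈ {k, i₀}, p j := by
            rw [Finset.sum_pair hk]
        _ ≤ ∑ j, p j := Finset.sum_le_sum_of_subset_of_nonneg this
            (fun j _ _ => le_of_lt (hp j))
    rw [hsum] at h
    linarith
  -- final combination
  set c : Fin d → Fin d → ℝ := fun j k => (p k)^2 * (p j)⁻¹ - p j with hc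
  set t : Fin d → Fin d → ℝ := fun j k => s j k * (c j k + c k j) with ht
  have htnn : ∀ j k, 0 ≤ t j k := by
    intro j k
    apply mul_nonneg (hsnn j k)
    exact pair_nonneg (hp j) (hp k)
  have htsymm : ∀ j k, t j k = t k j := by
    intro j k
    rw [ht]
    simp only
    rw [hssymm j k]
    ring
  have h2PoC : 2 * PoC H σ = ∑ j, ∑ k, t j k := by
    rw [hPoC]
    have hswap : ∑ j, ∑ k, s j k * c k j = ∑ j, ∑ k, s j k * c j k := by
      rw [Finset.sum_comm]
      exact Finset.sum_congr rfl fun j _ => Finset.sum_congr rfl fun k _ => by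
        rw [hssymm j k]
    have : ∑ j, ∑ k, t j k = (∑ j, ∑ k, s j k * c j k) + ∑ j, ∑ k, s j k * c k j := by
      rw [← Finset.sum_add_distrib]
      refine Finset.sum_congr rfl fun j _ => ?_
      rw [← Finset.sum_add_distrib]
      exact Finset.sum_congr rfl fun k _ => by rw [ht]; ring
    rw [this, hswap]
    ring
  have hlower : ∀ k, k ≠ i₀ → (2/ε - 3) * (2 * s i₀ k) ≤ t i₀ k + t k i₀ := by
    intro k hk
    have hcb := coeff_bound hε0 hε2 (hp k) hlam_le1 (hq_le k hk) hlam_low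
    have : t i₀ k = s i₀ k * (c i₀ k + c k i₀) := rfl
    rw [← htsymm i₀ k] at *
    have hge : 2/ε - 3 ≤ c i₀ k + c k i₀ := by
      rw [hc]
      simpa using hcb
    have hmul : s i₀ k * (2/ε - 3) ≤ s i₀ k * (c i₀ k + c k i₀) :=
      mul_le_mul_of_nonneg_left hge (hsnn i₀ k)
    have hcm : (2/ε-3) * s i₀ k = s i₀ k * (2/ε-3) := mul_comm _ _
    calc (2/ε - 3) * (2 * s i₀ k) = 2 * (s i₀ k * (2/ε - 3)) := by ring
      _ ≤ 2 * (s i₀ k * (c i₀ k + c k i₀)) := by linarith [hmul]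
      _ = t i₀ k + t i₀ k := by rw [← this]; ring
  -- split double sum
  have hsplit : ∑ j, ∑ k, t j k ≥
      (∑ k ∈ Finset.univ.erase i₀, t i₀ k) + ∑ j ∈ Finset.univ.erase i₀, t j i₀ := by
    have h1 : ∑ j, ∑ k, t j k = (∑ k, t i₀ k) + ∑ j ∈ Finset.univ.erase i₀, ∑ k, t j k := by
      exact (Finset.add_sum_erase _ (fun j => ∑ k, t j k) (Finset.mem_univ i₀)).symm
    have h2 : ∑ k ∈ Finset.univ.erase i₀, t i₀ k ≤ ∑ k, t i₀ k := by
      apply Finset.sum_le_sum_of_subset_of_nonneg (Finset.erase_subset _ _)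
      exact fun k _ _ => htnn i₀ k
    have h3 : ∑ j ∈ Finset.univ.erase i₀, t j i₀ ≤ ∑ j ∈ Finset.univ.erase i₀, ∑ k, t j k := by
      apply Finset.sum_le_sum
      intro j _
      exact Finset.single_le_sum (fun k _ => htnn j k) (Finset.mem_univ i₀)
    linarith
  have hfinal : (2/ε - 3) * (2 * ∑ k ∈ Finset.univ.erase i₀, s i₀ k)
      ≤ (∑ k ∈ Finset.univ.erase i₀, t i₀ k) + ∑ j ∈ Finset.univ.erase i₀, t j i₀ := by
    have : (2/ε - 3) * (2 * ∑ k ∈ Finset.univ.erase i₀, s i₀ k)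
        = ∑ k ∈ Finset.univ.erase i₀, (2/ε - 3) * (2 * s i₀ k) := by
      rw [Finset.mul_sum, Finset.mul_sum]
    rw [this, ← Finset.sum_add_distrib]
    apply Finset.sum_le_sum
    intro k hk
    exact hlower k (Finset.ne_of_mem_erase hk)
  rw [hVar]
  have := le_trans hfinal hsplit
  rw [← h2PoC] at this
  linarith
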